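/- Let E be a real vector space and W a generating wedge in E (W − W = E) with the (2,2)-Riesz decomposition property: whenever x₁, x₂, y₁, y₂ ∈ W satisfy x₁ + x₂ = y₁ + y₂, there exist z_{ij} ∈ W (i, j ∈ {1,2}) with x_i = z_{i1} + z_{i2} and y_j = z_{1j} + z_{2j}. Let F be a real vector space partially ordered by a cone V such that every nonempty subset of F that is bounded above has a supremum. Then the set L_b(E,F) of order bounded linear maps from E to F, ordered by S ≤ T iff (T − S)(W) ⊆ V, is a Dedekind complete vector lattice; moreover, for every nonempty family (T_i)_{i∈I} in L_b(E,F) that is bounded above and every x ∈ W, (sup_{i∈I} T_i)(x) = sup { ∑_{i∈I} T_i(y_i) : y_i ∈ W for all i, only finitely many y_i nonzero, ∑_{i∈I} y_i = x }. -/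
import Mathlib


/-- A wedge in a real vector space: a nonempty subset closed under addition
and multiplication by nonnegative scalars. -/
def IsWedge {E : Type*} [AddCommGroup E] [Module ℝ E] (W : Set E) : Prop :=
  W.Nonempty ∧ (∀ x ∈ W, ∀ y ∈ W, x + y ∈ W) ∧ ∀ (c : ℝ), 0 ≤ c → ∀ x ∈ W, c • x ∈ W

/-- `u` is a multi-upper bound of the family `(x i, W i)`. -/
def IsMultiUpperBound {E ι : Type*} [AddCommGroup E] [Module ℝ E]
    (x : ι → E) (W : ι → Set E) (u : E) : Prop :=
  ∀ i, u - x i ∈ W i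

/-- `z` is a multi-supremum of the family `(x i, W i)`. -/
def IsMultiSup {E ι : Type*} [AddCommGroup E] [Module ℝ E]
    (x : ι → E) (W : ι → Set E) (z : E) : Prop :=
  IsMultiUpperBound x W z ∧ ∀ u, IsMultiUpperBound x W u → ∀ i, u - z ∈ W i


open scoped Pointwise

/-- `T` is order bounded from the preordered space `(E,W)` to the ordered space `(F,V)`:
every subset of `E` that is order bounded (below and above) is mapped to an
order bounded subset of `F`. -/
def OrderBounded {E F : Type*} [AddCommGroup E] [Module ℝ E] [AddCommGroup F] [Module ℝ F]
    (W : Set E) (V : Set F) (T : E →ₗ[ℝ] F) : Prop :=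
  ∀ A : Set E, (∃ x y : E, ∀ a ∈ A, a - x ∈ W ∧ y - a ∈ W) →
    ∃ w z : F, ∀ a ∈ A, T a - w ∈ V ∧ z - T a ∈ V

/-- The ordering `S ≤ T` iff `(T - S)(W) ⊆ V` on linear maps. -/
def opLE {E F : Type*} [AddCommGroup E] [Module ℝ E] [AddCommGroup F] [Module ℝ F]
    (W : Set E) (V : Set F) (S T : E →ₗ[ℝ] F) : Prop :=
  ∀ x ∈ W, T x - S x ∈ V

set_option linter.unusedSectionVars false
set_option linter.unusedVariables false

namespace RKaux

variable {E F : Type*} [AddCommGroup E] [Module ℝ E] [AddCommGroup F] [Module ℝ F]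

lemma wedge_zero {W : Set E} (hW : IsWedge W) : (0:E) ∈ W := by
  obtain ⟨x, hx⟩ := hW.1
  simpa using hW.2.2 0 le_rfl x hx

lemma wedge_add {W : Set E} (hW : IsWedge W) {x y : E} (hx : x ∈ W) (hy : y ∈ W) :
    x + y ∈ W := hW.2.1 x hx y hy

lemma wedge_smul {W : Set E} (hW : IsWedge W) {c : ℝ} (hc : 0 ≤ c) {x : E} (hx : x ∈ W) :
    c • x ∈ W := hW.2.2 c hc x hx

lemma wedge_sum {W : Set E} (hW : IsWedge W) {ι : Type*} (s : Finset ι) (f : ι → E)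
    (h : ∀ i ∈ s, f i ∈ W) : ∑ i ∈ s, f i ∈ W := by
  classical
  induction s using Finset.induction_on with
  | empty => simpa using wedge_zero hW
  | @insert j s hj ih =>
    rw [Finset.sum_insert hj]
    exact wedge_add hW (h j (Finset.mem_insert_self _ _))
      (ih fun i hi => h i (Finset.mem_insert_of_mem hi))

variable {W : Set E}

/-- finite Riesz decomposition over a nonempty finset -/
lemma finset_decomp (hW : IsWedge W)
    (hRDP : ∀ x₁ x₂ y₁ y₂ : E, x₁ ∈ W → x₂ ∈ W → y₁ ∈ W → y₂ ∈ W →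
      x₁ + x₂ = y₁ + y₂ →
      ∃ z₁₁ z₁₂ z₂₁ z₂₂ : E, z₁₁ ∈ W ∧ z₁₂ ∈ W ∧ z₂₁ ∈ W ∧ z₂₂ ∈ W ∧
        x₁ = z₁₁ + z₁₂ ∧ x₂ = z₂₁ + z₂₂ ∧ y₁ = z₁₁ + z₂₁ ∧ y₂ = z₁₂ + z₂₂)
    {ι : Type*} (s : Finset ι) (hs : s.Nonempty) :
    ∀ (y : ι → E), (∀ i ∈ s, y i ∈ W) → ∀ x x' : E, x ∈ W → x' ∈ W →
      ∑ i ∈ s, y i = x + x' →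
      ∃ a b : ι → E, (∀ i ∈ s, a i ∈ W ∧ b i ∈ W ∧ a i + b i = y i) ∧
        ∑ i ∈ s, a i = x ∧ ∑ i ∈ s, b i = x' := by
  classical
  induction hs using Finset.Nonempty.cons_induction with
  | singleton j =>
    intro y hy x x' hx hx' hsum
    refine ⟨fun _ => x, fun _ => x', ?_, by simp, by simp⟩
    intro i hi
    rw [Finset.mem_singleton] at hi
    subst hi
    simp only [Finset.sum_singleton] at hsum
    exact ⟨hx, hx', hsum.symm⟩
  | cons j s hj hs ih =>
    intro y hy x x' hx hx' hsum
    rw [Finset.sum_cons] at hsum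
    have hys : ∑ i ∈ s, y i ∈ W :=
      wedge_sum hW s y fun i hi => hy i (Finset.mem_cons_of_mem hi)
    have hyj : y j ∈ W := hy j (Finset.mem_cons_self _ _)
    obtain ⟨z₁₁, z₁₂, z₂₁, z₂₂, h11, h12, h21, h22, e1, e2, e3, e4⟩ :=
      hRDP x x' (y j) (∑ i ∈ s, y i) hx hx' hyj hys hsum.symm
    obtain ⟨a, b, hab, hsa, hsb⟩ :=
      ih y (fun i hi => hy i (Finset.mem_cons_of_mem hi)) z₁₂ z₂₂ h12 h22 e4
    refine ⟨Function.update a j z₁₁, Function.update b j z₂₁, ?_, ?_, ?_⟩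
    · intro i hi
      rcases Finset.mem_cons.mp hi with rfl | hi
      · simp [Function.update_self, h11, h21, e3.symm]
      · have hne : i ≠ j := fun h => hj (h ▸ hi)
        simp only [Function.update_of_ne hne]
        exact hab i hi
    · rw [Finset.sum_cons, Function.update_self]
      rw [show (∑ i ∈ s, Function.update a j z₁₁ i) = ∑ i ∈ s, a i from
        Finset.sum_congr rfl fun i hi => Function.update_of_ne (fun h => hj (by rwa [h] at hi)) _ _, hsa]
      exact e1.symm
    · rw [Finset.sum_cons, Function.update_self]
      rw [show (∑ i ∈ s, Function.update b j z₂₁ i) = ∑ i ∈ s, b i from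
        Finset.sum_congr rfl fun i hi => Function.update_of_ne (fun h => hj (by rwa [h] at hi)) _ _, hsb]
      exact e2.symm


/-- Riesz decomposition for finsupps -/
lemma decomp (hW : IsWedge W)
    (hRDP : ∀ x₁ x₂ y₁ y₂ : E, x₁ ∈ W → x₂ ∈ W → y₁ ∈ W → y₂ ∈ W →
      x₁ + x₂ = y₁ + y₂ →
      ∃ z₁₁ z₁₂ z₂₁ z₂₂ : E, z₁₁ ∈ W ∧ z₁₂ ∈ W ∧ z₂₁ ∈ W ∧ z₂₂ ∈ W ∧
        x₁ = z₁₁ + z₁₂ ∧ x₂ = z₂₁ + z₂₂ ∧ y₁ = z₁₁ + z₂₁ ∧ y₂ = z₁₂ + z₂₂)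
    {ι : Type*} [Nonempty ι] (y : ι →₀ E) (hy : ∀ i, y i ∈ W) {x x' : E}
    (hx : x ∈ W) (hx' : x' ∈ W) (hsum : (y.sum fun _ v => v) = x + x') :
    ∃ A B : ι →₀ E, (∀ i, A i ∈ W) ∧ (∀ i, B i ∈ W) ∧
      (A.sum fun _ v => v) = x ∧ (B.sum fun _ v => v) = x' ∧
      ∀ {N : Type*} [AddCommMonoid N] (f : ι → E → N), (∀ i, f i 0 = 0) →
        (∀ i u v, f i (u + v) = f i u + f i v) →
        y.sum f = A.sum f + B.sum f := by
  classical
  set j : ι := Classical.arbitrary ι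
  set s : Finset ι := insert j y.support with hsdef
  have hsub : y.support ⊆ s := Finset.subset_insert _ _
  have hsum' : ∑ i ∈ s, y i = x + x' := by
    rw [← hsum]
    exact (Finsupp.sum_of_support_subset y hsub (fun _ v => v) fun i _ => rfl).symm
  obtain ⟨a, b, hab, hsa, hsb⟩ := finset_decomp hW hRDP s (Finset.insert_nonempty _ _)
    y (fun i _ => hy i) x x' hx hx' hsum'
  set a₀ : ι → E := fun i => if i ∈ s then a i else 0 with ha₀
  set b₀ : ι → E := fun i => if i ∈ s then b i else 0 with hb₀
  refine ⟨Finsupp.onFinset s a₀ (fun i hi => by by_contra h; simp [ha₀, h] at hi),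
    Finsupp.onFinset s b₀ (fun i hi => by by_contra h; simp [hb₀, h] at hi),
    ?_, ?_, ?_, ?_, ?_⟩
  · intro i
    simp only [Finsupp.onFinset_apply, ha₀]
    split
    · exact (hab i (by assumption)).1
    · exact wedge_zero hW
  · intro i
    simp only [Finsupp.onFinset_apply, hb₀]
    split
    · exact (hab i (by assumption)).2.1
    · exact wedge_zero hW
  · rw [Finsupp.onFinset_sum _ (fun _ => rfl), ← hsa]
    exact Finset.sum_congr rfl fun i hi => by simp [ha₀, hi]
  · rw [Finsupp.onFinset_sum _ (fun _ => rfl), ← hsb]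
    exact Finset.sum_congr rfl fun i hi => by simp [hb₀, hi]
  · intro N _ f hf0 hfadd
    rw [Finsupp.sum_of_support_subset y hsub _ (fun i _ => hf0 i),
      Finsupp.onFinset_sum _ (fun i => hf0 i), Finsupp.onFinset_sum _ (fun i => hf0 i),
      ← Finset.sum_add_distrib]
    refine Finset.sum_congr rfl fun i hi => ?_
    simp only [ha₀, hb₀, if_pos hi]
    rw [← hfadd, (hab i hi).2.2]


lemma cone_eq {V : Set F} (hcone : V ∩ (-V) = {0}) {a b : F}
    (h1 : a - b ∈ V) (h2 : b - a ∈ V) : a = b := by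
  have : a - b ∈ V ∩ (-V) := ⟨h1, by rw [Set.mem_neg, neg_sub]; exact h2⟩
  rw [hcone] at this
  exact sub_eq_zero.mp this

/-- upper bound in the `V`-order -/
def IsUB (V : Set F) (A : Set F) (u : F) : Prop := ∀ a ∈ A, u - a ∈ V

/-- supremum in the `V`-order -/
def IsSup (V : Set F) (A : Set F) (z : F) : Prop :=
  IsUB V A z ∧ ∀ u, IsUB V A u → u - z ∈ V

/-- the Riesz–Kantorovich set -/
def RKset (W : Set E) {ι : Type*} (T : ι → E →ₗ[ℝ] F) (x : E) : Set F :=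
  {f | ∃ y : ι →₀ E, (∀ i, y i ∈ W) ∧ (y.sum fun _ v => v) = x ∧ f = y.sum fun i v => T i v}

variable {V : Set F}

lemma single_mem_RKset (hW : IsWedge W) {ι : Type*} (T : ι → E →ₗ[ℝ] F) (i₀ : ι)
    {x : E} (hx : x ∈ W) : T i₀ x ∈ RKset W T x := by
  classical
  refine ⟨Finsupp.single i₀ x, ?_, ?_, ?_⟩
  · intro i
    rw [Finsupp.single_apply]
    split
    · exact hx
    · exact wedge_zero hW
  · exact Finsupp.sum_single_index rfl
  · exact (Finsupp.sum_single_index (h := fun i v => T i v) (map_zero (T i₀))).symm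

lemma ub_RKset_of_opLE (hV : IsWedge V) {ι : Type*} {T : ι → E →ₗ[ℝ] F} {U : E →ₗ[ℝ] F}
    (hU : ∀ i, opLE W V (T i) U) {x : E} (hx : x ∈ W) : IsUB V (RKset W T x) (U x) := by
  rintro f ⟨y, hyW, hysum, rfl⟩
  have hUx : U x = ∑ i ∈ y.support, U (y i) := by
    rw [← hysum]
    exact map_sum U _ _
  rw [hUx, Finsupp.sum, ← Finset.sum_sub_distrib]
  exact wedge_sum hV _ _ fun i _ => hU i (y i) (hyW i)

lemma smul_mem_RKset (hW : IsWedge W) {ι : Type*} {T : ι → E →ₗ[ℝ] F} {c : ℝ} (hc : 0 < c)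
    {x : E} {f : F} (hf : f ∈ RKset W T x) : c • f ∈ RKset W T (c • x) := by
  obtain ⟨y, hyW, hysum, rfl⟩ := hf
  refine ⟨c • y, ?_, ?_, ?_⟩
  · intro i
    rw [Finsupp.smul_apply]
    exact wedge_smul hW hc.le (hyW i)
  · rw [Finsupp.sum_smul_index' (fun _ => rfl)]
    rw [← hysum, Finsupp.sum, Finsupp.sum, Finset.smul_sum]
  · rw [Finsupp.sum_smul_index' (fun i => map_zero (T i))]
    rw [Finsupp.sum, Finsupp.sum, Finset.smul_sum]
    exact Finset.sum_congr rfl fun i _ => (map_smul (T i) c (y i)).symm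

lemma add_mem_RKset {ι : Type*} {T : ι → E →ₗ[ℝ] F} {x x' : E} {f f' : F}
    (hf : f ∈ RKset W T x) (hf' : f' ∈ RKset W T x') (hW : IsWedge W) :
    f + f' ∈ RKset W T (x + x') := by
  obtain ⟨y, hyW, hysum, rfl⟩ := hf
  obtain ⟨y', hyW', hysum', rfl⟩ := hf'
  refine ⟨y + y', ?_, ?_, ?_⟩
  · intro i
    rw [Finsupp.add_apply]
    exact wedge_add hW (hyW i) (hyW' i)
  · rw [Finsupp.sum_add_index' (fun _ => rfl) (fun _ _ _ => rfl), hysum, hysum']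
  · rw [Finsupp.sum_add_index' (fun i => map_zero (T i)) (fun i => map_add (T i))]

/-- The core construction: the Riesz–Kantorovich supremum operator. -/
lemma exists_sup (hW : IsWedge W) (hgen : W - W = Set.univ)
    (hRDP : ∀ x₁ x₂ y₁ y₂ : E, x₁ ∈ W → x₂ ∈ W → y₁ ∈ W → y₂ ∈ W →
      x₁ + x₂ = y₁ + y₂ →
      ∃ z₁₁ z₁₂ z₂₁ z₂₂ : E, z₁₁ ∈ W ∧ z₁₂ ∈ W ∧ z₂₁ ∈ W ∧ z₂₂ ∈ W ∧
        x₁ = z₁₁ + z₁₂ ∧ x₂ = z₂₁ + z₂₂ ∧ y₁ = z₁₁ + z₂₁ ∧ y₂ = z₁₂ + z₂₂)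
    (hV : IsWedge V) (hcone : V ∩ (-V) = {0})
    (hDC : ∀ A : Set F, A.Nonempty → (∃ u, ∀ a ∈ A, u - a ∈ V) →
      ∃ z, (∀ a ∈ A, z - a ∈ V) ∧ ∀ u, (∀ a ∈ A, u - a ∈ V) → u - z ∈ V)
    {ι : Type*} [Nonempty ι] (T : ι → E →ₗ[ℝ] F)
    (hbdd : ∀ x ∈ W, ∃ u, IsUB V (RKset W T x) u) :
    ∃ R : E →ₗ[ℝ] F, ∀ x ∈ W, IsSup V (RKset W T x) (R x) := by
  classical
  have hex : ∀ x, x ∈ W → ∃ z, IsSup V (RKset W T x) z := by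
    intro x hx
    obtain ⟨u, hu⟩ := hbdd x hx
    obtain ⟨z, h1, h2⟩ := hDC (RKset W T x)
      ⟨_, single_mem_RKset hW T (Classical.arbitrary ι) hx⟩ ⟨u, hu⟩
    exact ⟨z, h1, h2⟩
  set g : E → F := fun x => if hx : x ∈ W then (hex x hx).choose else 0 with hgdef
  have hg : ∀ x, x ∈ W → IsSup V (RKset W T x) (g x) := by
    intro x hx
    rw [hgdef]
    simp only [dif_pos hx]
    exact (hex x hx).choose_spec
  -- additivity of `g` on `W`
  have gadd : ∀ x, x ∈ W → ∀ x', x' ∈ W → g (x + x') = g x + g x' := by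
    intro x hx x' hx'
    have hxx' : x + x' ∈ W := wedge_add hW hx hx'
    have hz := hg _ hxx'
    have hzx := hg x hx
    have hzx' := hg x' hx'
    have d1 : g (x + x') - (g x + g x') ∈ V := by
      have step1 : IsUB V (RKset W T x) (g (x + x') - g x') := by
        intro a ha
        have hub : IsUB V (RKset W T x') (g (x + x') - a) := by
          intro b hb
          have := hz.1 _ (add_mem_RKset ha hb hW)
          rwa [sub_sub]
        have h2 := hzx'.2 _ hub
        rwa [sub_right_comm] at h2
      have h3 := hzx.2 _ step1
      have heq : g (x + x') - (g x + g x') = g (x + x') - g x' - g x := by abel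
      rwa [heq]
    have d2 : (g x + g x') - g (x + x') ∈ V := by
      apply hz.2
      rintro f ⟨y, hyW, hysum, rfl⟩
      obtain ⟨A, B, hA, hB, hAs, hBs, hsplit⟩ := decomp hW hRDP y hyW hx hx' hysum
      have hfa : (A.sum fun i v => T i v) ∈ RKset W T x := ⟨A, hA, hAs, rfl⟩
      have hfb : (B.sum fun i v => T i v) ∈ RKset W T x' := ⟨B, hB, hBs, rfl⟩
      rw [hsplit (fun i v => T i v) (fun i => map_zero (T i)) (fun i => map_add (T i))]
      have heq : (g x + g x') - ((A.sum fun i v => T i v) + (B.sum fun i v => T i v)) =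
          (g x - A.sum fun i v => T i v) + (g x' - B.sum fun i v => T i v) := by abel
      rw [heq]
      exact wedge_add hV (hzx.1 _ hfa) (hzx'.1 _ hfb)
    exact cone_eq hcone d1 d2
  have g0 : g 0 = 0 := by
    have h := gadd 0 (wedge_zero hW) 0 (wedge_zero hW)
    rw [add_zero] at h
    exact left_eq_add.mp h
  -- positive homogeneity of `g` on `W`
  have gsmul : ∀ (c : ℝ), 0 ≤ c → ∀ x, x ∈ W → g (c • x) = c • g x := by
    intro c hc x hx
    rcases eq_or_lt_of_le hc with rfl | hc
    · rw [zero_smul, zero_smul, g0]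
    · have hcx : c • x ∈ W := wedge_smul hW hc.le hx
      have hsup : IsSup V (RKset W T (c • x)) (c • g x) := by
        constructor
        · intro f hf
          have hf' : c⁻¹ • f ∈ RKset W T x := by
            have := smul_mem_RKset hW (inv_pos.mpr hc) hf
            rwa [smul_smul, inv_mul_cancel₀ hc.ne', one_smul] at this
          have := (hg x hx).1 _ hf'
          have h2 := wedge_smul hV hc.le this
          rwa [smul_sub, smul_smul, mul_inv_cancel₀ hc.ne', one_smul] at h2
        · intro u hu
          have hub : IsUB V (RKset W T x) (c⁻¹ • u) := by
            intro f' hf'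
            have := hu _ (smul_mem_RKset hW hc hf')
            have h2 := wedge_smul hV (inv_pos.mpr hc).le this
            rwa [smul_sub, smul_smul, inv_mul_cancel₀ hc.ne', one_smul] at h2
          have h3 := (hg x hx).2 _ hub
          have h4 := wedge_smul hV hc.le h3
          rwa [smul_sub, smul_smul, mul_inv_cancel₀ hc.ne', one_smul] at h4
      have h5 := (hg _ hcx).2 _ hsup.1
      have h6 := hsup.2 _ (hg _ hcx).1
      exact cone_eq hcone h6 h5
  -- decomposition of `E`
  have hdecE : ∀ e : E, ∃ p q : E, p ∈ W ∧ q ∈ W ∧ p - q = e := by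
    intro e
    have he : e ∈ W - W := by rw [hgen]; trivial
    obtain ⟨p, hp, q, hq, hpq⟩ := Set.mem_sub.mp he
    exact ⟨p, q, hp, hq, hpq⟩
  choose p q hp hq hpq using hdecE
  set Rf : E → F := fun e => g (p e) - g (q e) with hRf
  have hRapp : ∀ e, Rf e = g (p e) - g (q e) := fun e => rfl
  have hRW : ∀ x, x ∈ W → Rf x = g x := by
    intro x hx
    have hpx : x + q x = p x := by
      have := hpq x
      rw [sub_eq_iff_eq_add] at this
      rw [this]
    have h7 := gadd x hx (q x) (hq x)
    rw [hpx] at h7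
    rw [hRapp, h7, add_sub_cancel_right]
  have hadd : ∀ e e', Rf (e + e') = Rf e + Rf e' := by
    intro e e'
    have key : p (e + e') + (q e + q e') = (p e + p e') + q (e + e') := by
      have h1 := hpq (e + e')
      have h2 := hpq e
      have h3 := hpq e'
      have h4 : p (e + e') - q (e + e') = (p e + p e') - (q e + q e') := by
        rw [h1, ← sub_add_sub_comm, h2, h3]
      rw [sub_eq_sub_iff_add_eq_add] at h4
      exact h4
    have e5 : g (p (e + e')) + (g (q e) + g (q e')) =
        g (p e) + g (p e') + g (q (e + e')) := by
      calc g (p (e + e')) + (g (q e) + g (q e'))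
          = g (p (e + e')) + g (q e + q e') := by rw [gadd _ (hq e) _ (hq e')]
        _ = g (p (e + e') + (q e + q e')) :=
            (gadd _ (hp _) _ (wedge_add hW (hq e) (hq e'))).symm
        _ = g ((p e + p e') + q (e + e')) := by rw [key]
        _ = g (p e + p e') + g (q (e + e')) :=
            gadd _ (wedge_add hW (hp e) (hp e')) _ (hq _)
        _ = g (p e) + g (p e') + g (q (e + e')) := by rw [gadd _ (hp e) _ (hp e')]
    have hdiff : Rf (e + e') - (Rf e + Rf e') =
        (g (p (e + e')) + (g (q e) + g (q e'))) -
          (g (p e) + g (p e') + g (q (e + e'))) := by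
      simp only [hRapp]; abel
    rw [e5, sub_self] at hdiff
    exact sub_eq_zero.mp hdiff
  have hsmul : ∀ (c : ℝ) (e : E), Rf (c • e) = c • Rf e := by
    intro c e
    rcases le_or_gt 0 c with hc | hc
    · have key : p (c • e) + c • q e = c • p e + q (c • e) := by
        have h1 := hpq (c • e)
        have h2 := hpq e
        have h4 : p (c • e) - q (c • e) = c • p e - c • q e := by
          rw [h1, ← smul_sub, h2]
        rw [sub_eq_sub_iff_add_eq_add] at h4
        exact h4
      have e5 : g (p (c • e)) + c • g (q e) = c • g (p e) + g (q (c • e)) := by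
        calc g (p (c • e)) + c • g (q e)
            = g (p (c • e)) + g (c • q e) := by rw [gsmul c hc _ (hq e)]
          _ = g (p (c • e) + c • q e) :=
              (gadd _ (hp _) _ (wedge_smul hW hc (hq e))).symm
          _ = g (c • p e + q (c • e)) := by rw [key]
          _ = g (c • p e) + g (q (c • e)) :=
              gadd _ (wedge_smul hW hc (hp e)) _ (hq _)
          _ = c • g (p e) + g (q (c • e)) := by rw [gsmul c hc _ (hp e)]
      have hdiff : Rf (c • e) - c • Rf e =
          (g (p (c • e)) + c • g (q e)) - (c • g (p e) + g (q (c • e))) := by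
        simp only [hRapp, smul_sub]; abel
      rw [e5, sub_self] at hdiff
      exact sub_eq_zero.mp hdiff
    · have hd : 0 ≤ -c := by linarith
      have key : p (c • e) + (-c) • p e = (-c) • q e + q (c • e) := by
        have h1 := hpq (c • e)
        have h2 := hpq e
        have h4 : p (c • e) - q (c • e) = (-c) • q e - (-c) • p e := by
          rw [h1, show (c:ℝ) • e = c • (p e - q e) from by rw [h2]]
          simp only [neg_smul, smul_sub]
          abel
        rw [sub_eq_sub_iff_add_eq_add] at h4
        exact h4
      have e5 : g (p (c • e)) + (-c) • g (p e) = (-c) • g (q e) + g (q (c • e)) := by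
        calc g (p (c • e)) + (-c) • g (p e)
            = g (p (c • e)) + g ((-c) • p e) := by rw [gsmul (-c) hd _ (hp e)]
          _ = g (p (c • e) + (-c) • p e) :=
              (gadd _ (hp _) _ (wedge_smul hW hd (hp e))).symm
          _ = g ((-c) • q e + q (c • e)) := by rw [key]
          _ = g ((-c) • q e) + g (q (c • e)) :=
              gadd _ (wedge_smul hW hd (hq e)) _ (hq _)
          _ = (-c) • g (q e) + g (q (c • e)) := by rw [gsmul (-c) hd _ (hq e)]
      have hdiff : Rf (c • e) - c • Rf e =
          (g (p (c • e)) + (-c) • g (p e)) - ((-c) • g (q e) + g (q (c • e))) := by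
        simp only [hRapp, smul_sub, neg_smul]; abel
      rw [e5, sub_self] at hdiff
      exact sub_eq_zero.mp hdiff
  refine ⟨IsLinearMap.mk' Rf ⟨hadd, fun c e => hsmul c e⟩, ?_⟩
  intro x hx
  show IsSup V (RKset W T x) (Rf x)
  rw [hRW x hx]
  exact hg x hx


lemma ob_interval_bounds {T : E →ₗ[ℝ] F} (hT : OrderBounded W V T) {u : E} (hu : u ∈ W) :
    ∃ w z : F, ∀ v : E, v ∈ W → u - v ∈ W → T v - w ∈ V ∧ z - T v ∈ V := by
  obtain ⟨w, z, h⟩ := hT {v | v ∈ W ∧ u - v ∈ W}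
    ⟨0, u, fun a ha => ⟨by simpa using ha.1, ha.2⟩⟩
  exact ⟨w, z, fun v h1 h2 => h v ⟨h1, h2⟩⟩

lemma ob_of_interval (hW : IsWedge W) (hV : IsWedge V) {R : E →ₗ[ℝ] F}
    (hlow : ∀ u ∈ W, ∃ w : F, ∀ v : E, v ∈ W → u - v ∈ W → R v - w ∈ V)
    (hup : ∀ u ∈ W, ∃ z : F, ∀ v : E, v ∈ W → u - v ∈ W → z - R v ∈ V) :
    OrderBounded W V R := by
  rintro A ⟨x₀, y₀, hA⟩
  rcases Set.eq_empty_or_nonempty A with rfl | ⟨a₀, ha₀⟩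
  · exact ⟨0, 0, fun a ha => absurd ha (Set.notMem_empty a)⟩
  have hu : y₀ - x₀ ∈ W := by
    rw [← sub_add_sub_cancel y₀ a₀ x₀]
    exact wedge_add hW (hA a₀ ha₀).2 (hA a₀ ha₀).1
  obtain ⟨w, hw⟩ := hlow _ hu
  obtain ⟨z, hz⟩ := hup _ hu
  refine ⟨R x₀ + w, R x₀ + z, fun a ha => ?_⟩
  have hv : a - x₀ ∈ W := (hA a ha).1
  have hv' : (y₀ - x₀) - (a - x₀) ∈ W := by
    rw [sub_sub_sub_cancel_right]
    exact (hA a ha).2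
  constructor
  · have h1 := (hw _ hv hv')
    rw [map_sub] at h1
    have heq : R a - (R x₀ + w) = R a - R x₀ - w := by abel
    rwa [heq]
  · have h1 := (hz _ hv hv')
    rw [map_sub] at h1
    have heq : R x₀ + z - R a = z - (R a - R x₀) := by abel
    rwa [heq]

lemma interval_low_of_opLE (hV : IsWedge V) {P R : E →ₗ[ℝ] F}
    (hP : OrderBounded W V P) (hPR : opLE W V P R) :
    ∀ u ∈ W, ∃ w : F, ∀ v : E, v ∈ W → u - v ∈ W → R v - w ∈ V := by
  intro u hu
  obtain ⟨w, z, h⟩ := ob_interval_bounds hP hu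
  refine ⟨w, fun v hv hv' => ?_⟩
  have h1 := (h v hv hv').1
  have h2 := hPR v hv
  have heq : R v - w = (R v - P v) + (P v - w) := by abel
  rw [heq]
  exact wedge_add hV h2 h1

lemma interval_up_of_opLE (hV : IsWedge V) {Q R : E →ₗ[ℝ] F}
    (hQ : OrderBounded W V Q) (hRQ : opLE W V R Q) :
    ∀ u ∈ W, ∃ z : F, ∀ v : E, v ∈ W → u - v ∈ W → z - R v ∈ V := by
  intro u hu
  obtain ⟨w, z, h⟩ := ob_interval_bounds hQ hu
  refine ⟨z, fun v hv hv' => ?_⟩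
  have h1 := (h v hv hv').2
  have h2 := hRQ v hv
  have heq : z - R v = (z - Q v) + (Q v - R v) := by abel
  rw [heq]
  exact wedge_add hV h1 h2

lemma ob_zero (hV : IsWedge V) : OrderBounded W V (0 : E →ₗ[ℝ] F) := by
  intro A _
  refine ⟨0, 0, fun a _ => ?_⟩
  simp only [LinearMap.zero_apply, sub_zero, sub_self]
  exact ⟨wedge_zero hV, wedge_zero hV⟩

lemma ob_add (hV : IsWedge V) {T S : E →ₗ[ℝ] F} (hT : OrderBounded W V T)
    (hS : OrderBounded W V S) : OrderBounded W V (T + S) := by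
  intro A hA
  obtain ⟨w₁, z₁, h₁⟩ := hT A hA
  obtain ⟨w₂, z₂, h₂⟩ := hS A hA
  refine ⟨w₁ + w₂, z₁ + z₂, fun a ha => ?_⟩
  constructor
  · have heq : (T + S) a - (w₁ + w₂) = (T a - w₁) + (S a - w₂) := by
      rw [LinearMap.add_apply]; abel
    rw [heq]
    exact wedge_add hV (h₁ a ha).1 (h₂ a ha).1
  · have heq : (z₁ + z₂) - (T + S) a = (z₁ - T a) + (z₂ - S a) := by
      rw [LinearMap.add_apply]; abel
    rw [heq]
    exact wedge_add hV (h₁ a ha).2 (h₂ a ha).2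

lemma ob_smul (hV : IsWedge V) (c : ℝ) {T : E →ₗ[ℝ] F} (hT : OrderBounded W V T) :
    OrderBounded W V (c • T) := by
  intro A hA
  obtain ⟨w, z, h⟩ := hT A hA
  rcases le_or_gt 0 c with hc | hc
  · refine ⟨c • w, c • z, fun a ha => ?_⟩
    constructor
    · have heq : (c • T) a - c • w = c • (T a - w) := by
        rw [LinearMap.smul_apply, smul_sub]
      rw [heq]
      exact wedge_smul hV hc (h a ha).1
    · have heq : c • z - (c • T) a = c • (z - T a) := by
        rw [LinearMap.smul_apply, smul_sub]
      rw [heq]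
      exact wedge_smul hV hc (h a ha).2
  · have hd : 0 ≤ -c := by linarith
    refine ⟨c • z, c • w, fun a ha => ?_⟩
    constructor
    · have heq : (c • T) a - c • z = (-c) • (z - T a) := by
        rw [LinearMap.smul_apply]
        simp only [neg_smul, smul_sub]
        abel
      rw [heq]
      exact wedge_smul hV hd (h a ha).2
    · have heq : c • w - (c • T) a = (-c) • (T a - w) := by
        rw [LinearMap.smul_apply]
        simp only [neg_smul, smul_sub]
        abel
      rw [heq]
      exact wedge_smul hV hd (h a ha).1

lemma ob_sub (hV : IsWedge V) {T S : E →ₗ[ℝ] F} (hT : OrderBounded W V T)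
    (hS : OrderBounded W V S) : OrderBounded W V (T - S) := by
  have h := ob_add hV hT (ob_smul hV (-1 : ℝ) hS)
  rwa [neg_one_smul, ← sub_eq_add_neg] at h

lemma antisym (hgen : W - W = Set.univ) (hcone : V ∩ (-V) = {0})
    {T S : E →ₗ[ℝ] F} (h1 : opLE W V T S) (h2 : opLE W V S T) : T = S := by
  have hWeq : ∀ x ∈ W, T x = S x := fun x hx => cone_eq hcone (h2 x hx) (h1 x hx)
  ext e
  have he : e ∈ W - W := by rw [hgen]; trivial
  obtain ⟨a, ha, b, hb, hab⟩ := Set.mem_sub.mp he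
  rw [← hab, map_sub, map_sub, hWeq a ha, hWeq b hb]

end RKaux

set_option maxHeartbeats 1000000 in
theorem stmt_16.{u} {E F : Type*} [AddCommGroup E] [Module ℝ E] [AddCommGroup F] [Module ℝ F]
    (W : Set E) (hW : IsWedge W) (hgen : W - W = Set.univ)
    (hRDP : ∀ x₁ x₂ y₁ y₂ : E, x₁ ∈ W → x₂ ∈ W → y₁ ∈ W → y₂ ∈ W →
      x₁ + x₂ = y₁ + y₂ →
      ∃ z₁₁ z₁₂ z₂₁ z₂₂ : E, z₁₁ ∈ W ∧ z₁₂ ∈ W ∧ z₂₁ ∈ W ∧ z₂₂ ∈ W ∧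
        x₁ = z₁₁ + z₁₂ ∧ x₂ = z₂₁ + z₂₂ ∧ y₁ = z₁₁ + z₂₁ ∧ y₂ = z₁₂ + z₂₂)
    (V : Set F) (hV : IsWedge V) (hcone : V ∩ (-V) = {0})
    (hDC : ∀ A : Set F, A.Nonempty → (∃ u, ∀ a ∈ A, u - a ∈ V) →
      ∃ z, (∀ a ∈ A, z - a ∈ V) ∧ ∀ u, (∀ a ∈ A, u - a ∈ V) → u - z ∈ V) :
    -- `L_b(E,F)` is a linear subspace of `L(E,F)`
    (OrderBounded W V 0 ∧
      (∀ T S : E →ₗ[ℝ] F, OrderBounded W V T → OrderBounded W V S →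
        OrderBounded W V (T + S)) ∧
      (∀ (c : ℝ) (T : E →ₗ[ℝ] F), OrderBounded W V T → OrderBounded W V (c • T))) ∧
    -- the order on `L_b(E,F)` is a partial order
    (∀ T S : E →ₗ[ℝ] F, OrderBounded W V T → OrderBounded W V S →
      opLE W V T S → opLE W V S T → T = S) ∧
    -- `L_b(E,F)` is a lattice: any two elements have a least upper bound
    (∀ T S : E →ₗ[ℝ] F, OrderBounded W V T → OrderBounded W V S →
      ∃ R : E →ₗ[ℝ] F, OrderBounded W V R ∧ opLE W V T R ∧ opLE W V S R ∧
        ∀ U : E →ₗ[ℝ] F, OrderBounded W V U → opLE W V T U → opLE W V S U → opLE W V R U) ∧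
    -- `L_b(E,F)` is Dedekind complete
    (∀ 𝒜 : Set (E →ₗ[ℝ] F), (∀ T ∈ 𝒜, OrderBounded W V T) → 𝒜.Nonempty →
      (∃ U, OrderBounded W V U ∧ ∀ T ∈ 𝒜, opLE W V T U) →
      ∃ R : E →ₗ[ℝ] F, OrderBounded W V R ∧ (∀ T ∈ 𝒜, opLE W V T R) ∧
        ∀ U : E →ₗ[ℝ] F, OrderBounded W V U → (∀ T ∈ 𝒜, opLE W V T U) → opLE W V R U) ∧
    -- the Riesz-Kantorovich formula for the supremum of any nonempty bounded above family
    (∀ (ι : Type u) (T : ι → E →ₗ[ℝ] F), Nonempty ι →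
      (∀ i, OrderBounded W V (T i)) →
      (∃ U, OrderBounded W V U ∧ ∀ i, opLE W V (T i) U) →
      ∀ R : E →ₗ[ℝ] F, OrderBounded W V R → (∀ i, opLE W V (T i) R) →
        (∀ U : E →ₗ[ℝ] F, OrderBounded W V U → (∀ i, opLE W V (T i) U) → opLE W V R U) →
        ∀ x ∈ W,
          (∀ f ∈ {f : F | ∃ y : ι →₀ E, (∀ i, y i ∈ W) ∧ (y.sum fun _ v => v) = x ∧
              f = y.sum fun i v => (T i) v}, R x - f ∈ V) ∧
          (∀ u : F, (∀ f ∈ {f : F | ∃ y : ι →₀ E, (∀ i, y i ∈ W) ∧ (y.sum fun _ v => v) = x ∧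
              f = y.sum fun i v => (T i) v}, u - f ∈ V) → u - R x ∈ V)) := by

  classical
  refine ⟨⟨RKaux.ob_zero hV, fun T S hT hS => RKaux.ob_add hV hT hS,
    fun c T hT => RKaux.ob_smul hV c hT⟩,
    fun T S _ _ h1 h2 => RKaux.antisym hgen hcone h1 h2, ?_, ?_, ?_⟩
  -- binary suprema
  · intro Tm Sm hTm hSm
    set G : Bool → E →ₗ[ℝ] F := fun b => bif b then Tm else Sm with hG
    have hD : OrderBounded W V (Sm - Tm) := RKaux.ob_sub hV hSm hTm
    have hdec : ∀ v ∈ W, ∀ f ∈ RKaux.RKset W G v,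
        ∃ b : E, b ∈ W ∧ v - b ∈ W ∧ f = Tm v + (Sm - Tm) b := by
      rintro v hv f ⟨y, hyW, hysum, rfl⟩
      rw [Finsupp.sum_fintype _ _ (fun _ => rfl), Fintype.sum_bool] at hysum
      refine ⟨y false, hyW false, ?_, ?_⟩
      · rw [← hysum, add_sub_cancel_right]
        exact hyW true
      · rw [Finsupp.sum_fintype _ _ (fun i => map_zero (G i)), Fintype.sum_bool]
        show Tm (y true) + Sm (y false) = Tm v + (Sm - Tm) (y false)
        rw [← hysum, map_add, LinearMap.sub_apply]
        abel
    have hbdd : ∀ x ∈ W, ∃ u, RKaux.IsUB V (RKaux.RKset W G x) u := by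
      intro x hx
      obtain ⟨w, z, hwz⟩ := RKaux.ob_interval_bounds hD hx
      refine ⟨Tm x + z, fun f hf => ?_⟩
      obtain ⟨b, hb, hxb, rfl⟩ := hdec x hx f hf
      have heq : Tm x + z - (Tm x + (Sm - Tm) b) = z - (Sm - Tm) b := by abel
      rw [heq]
      exact (hwz b hb hxb).2
    obtain ⟨R, hR⟩ := RKaux.exists_sup hW hgen hRDP hV hcone hDC G hbdd
    have hTR : opLE W V Tm R := fun x hx =>
      (hR x hx).1 _ (RKaux.single_mem_RKset hW G true hx)
    have hSR : opLE W V Sm R := fun x hx =>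
      (hR x hx).1 _ (RKaux.single_mem_RKset hW G false hx)
    have hleast : ∀ U : E →ₗ[ℝ] F, OrderBounded W V U → opLE W V Tm U → opLE W V Sm U →
        opLE W V R U := by
      intro U _ h1 h2 x hx
      refine (hR x hx).2 _ (RKaux.ub_RKset_of_opLE hV ?_ hx)
      intro b
      cases b
      · exact h2
      · exact h1
    have hRob : OrderBounded W V R := by
      refine RKaux.ob_of_interval hW hV (RKaux.interval_low_of_opLE hV hTm hTR) ?_
      intro u hu
      obtain ⟨w₁, z₁, h₁⟩ := RKaux.ob_interval_bounds hTm hu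
      obtain ⟨w₂, z₂, h₂⟩ := RKaux.ob_interval_bounds hD hu
      refine ⟨z₁ + z₂, fun v hv hv' => ?_⟩
      refine (hR v hv).2 _ fun f hf => ?_
      obtain ⟨b, hb, hvb, rfl⟩ := hdec v hv f hf
      have hub : u - b ∈ W := by
        rw [← sub_add_sub_cancel u v b]
        exact hW.2.1 _ hv' _ hvb
      have heq : z₁ + z₂ - (Tm v + (Sm - Tm) b) = (z₁ - Tm v) + (z₂ - (Sm - Tm) b) := by abel
      rw [heq]
      exact hV.2.1 _ (h₁ v hv hv').2 _ (h₂ b hb hub).2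
    exact ⟨R, hRob, hTR, hSR, hleast⟩
  -- Dedekind completeness
  · rintro 𝒜 h𝒜ob h𝒜ne ⟨U, hUob, hUb⟩
    haveI : Nonempty ↥𝒜 := h𝒜ne.to_subtype
    set G : ↥𝒜 → E →ₗ[ℝ] F := fun i => (i : E →ₗ[ℝ] F) with hG
    have hGU : ∀ i, opLE W V (G i) U := fun i => hUb _ i.2
    have hbdd : ∀ x ∈ W, ∃ u, RKaux.IsUB V (RKaux.RKset W G x) u :=
      fun x hx => ⟨U x, RKaux.ub_RKset_of_opLE hV hGU hx⟩
    obtain ⟨R, hR⟩ := RKaux.exists_sup hW hgen hRDP hV hcone hDC G hbdd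
    have hupper : ∀ Tm ∈ 𝒜, opLE W V Tm R := fun Tm hTm x hx =>
      (hR x hx).1 _ (RKaux.single_mem_RKset hW G ⟨Tm, hTm⟩ hx)
    have hleast : ∀ U' : E →ₗ[ℝ] F, OrderBounded W V U' → (∀ Tm ∈ 𝒜, opLE W V Tm U') →
        opLE W V R U' := fun U' _ hU' x hx =>
      (hR x hx).2 _ (RKaux.ub_RKset_of_opLE hV (fun i => hU' _ i.2) hx)
    have hRU : opLE W V R U := hleast U hUob hUb
    obtain ⟨T₀, hT₀⟩ := h𝒜ne
    have hRob : OrderBounded W V R :=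
      RKaux.ob_of_interval hW hV
        (RKaux.interval_low_of_opLE hV (h𝒜ob T₀ hT₀) (hupper T₀ hT₀))
        (RKaux.interval_up_of_opLE hV hUob hRU)
    exact ⟨R, hRob, hupper, hleast⟩
  -- Riesz–Kantorovich formula
  · intro ι T hι hTob hbU R hRob hupper hleast x hx
    haveI := hι
    obtain ⟨U, hUob, hU⟩ := hbU
    have hbdd : ∀ x' ∈ W, ∃ u, RKaux.IsUB V (RKaux.RKset W T x') u :=
      fun x' hx' => ⟨U x', RKaux.ub_RKset_of_opLE hV hU hx'⟩
    obtain ⟨R', hR'⟩ := RKaux.exists_sup hW hgen hRDP hV hcone hDC T hbdd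
    have hup' : ∀ i, opLE W V (T i) R' := fun i x' hx' =>
      (hR' x' hx').1 _ (RKaux.single_mem_RKset hW T i hx')
    have hR'U : opLE W V R' U := fun x' hx' =>
      (hR' x' hx').2 _ (RKaux.ub_RKset_of_opLE hV hU hx')
    have hR'ob : OrderBounded W V R' :=
      RKaux.ob_of_interval hW hV
        (RKaux.interval_low_of_opLE hV (hTob (Classical.arbitrary ι))
          (hup' (Classical.arbitrary ι)))
        (RKaux.interval_up_of_opLE hV hUob hR'U)
    have h1 : opLE W V R R' := hleast R' hR'ob hup'
    have h2 : opLE W V R' R := fun x' hx' =>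
      (hR' x' hx').2 _ (RKaux.ub_RKset_of_opLE hV hupper hx')
    have hRx : R x = R' x := RKaux.cone_eq hcone (h2 x hx) (h1 x hx)
    constructor
    · intro f hf
      rw [hRx]
      exact (hR' x hx).1 f hf
    · intro u hu
      rw [hRx]
      exact (hR' x hx).2 u hu
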